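/- For odd positive integers p·m (i.e., p and m both odd), ∑_{k=1}^{∞} artanh(L_{pm}/L_{p(2k+m)}) = ∑_{k=1}^{m} artanh(φ^{-2pk}), where φ is the golden ratio and L the Lucas sequence. -/

import Mathlib

noncomputable def phi : ℝ := (1 + Real.sqrt 5) / 2

noncomputable def artanh (x : ℝ) : ℝ := (1 / 2) * Real.log ((1 + x) / (1 - x))

def lucas : ℕ → ℕ
  | 0 => 2
  | 1 => 1
  | n + 2 => lucas n + lucas (n + 1)

lemma sqrt5_pos : (0:ℝ) < Real.sqrt 5 := Real.sqrt_pos.2 (by norm_num)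

lemma phi_gt_one : (1:ℝ) < phi := by
  have h : (1:ℝ) < Real.sqrt 5 := by
    have := Real.lt_sqrt (x := 1) (y := 5) (by norm_num)
    simpa using this.2 (by norm_num)
  unfold phi; linarith

lemma phi_pos : (0:ℝ) < phi := lt_trans one_pos phi_gt_one

lemma phi_ne : phi ≠ 0 := ne_of_gt phi_pos

lemma phi_sq : phi ^ 2 = phi + 1 := by
  have h5 : Real.sqrt 5 ^ 2 = 5 := Real.sq_sqrt (by norm_num)
  unfold phi; nlinarith [h5]

noncomputable def psi : ℝ := (1 - Real.sqrt 5) / 2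

lemma psi_sq : psi ^ 2 = psi + 1 := by
  have h5 : Real.sqrt 5 ^ 2 = 5 := Real.sq_sqrt (by norm_num)
  unfold psi; nlinarith [h5]

lemma psi_eq : psi = -phi⁻¹ := by
  have h5 : Real.sqrt 5 ^ 2 = 5 := Real.sq_sqrt (by norm_num)
  have : phi * psi = -1 := by unfold phi psi; nlinarith [h5]
  field_simp [phi_ne]
  nlinarith [this]

lemma lucas_real (n : ℕ) : (lucas n : ℝ) = phi ^ n + psi ^ n := by
  induction n using Nat.strong_induction_on with
  | _ n ih =>
    match n with
    | 0 => norm_num [lucas]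
    | 1 => show ((1:ℕ):ℝ) = _
           simp only [pow_one, Nat.cast_one]; unfold phi psi; ring
    | n + 2 =>
      have h1 := ih n (by omega)
      have h2 := ih (n+1) (by omega)
      show ((lucas n + lucas (n+1) : ℕ) : ℝ) = _
      push_cast [h1, h2]
      have e1 : phi ^ (n+2) = phi ^ n * phi ^ 2 := by ring
      have e2 : psi ^ (n+2) = psi ^ n * psi ^ 2 := by ring
      rw [e1, e2, phi_sq, psi_sq]; ring

lemma lucas_odd {n : ℕ} (hn : Odd n) : (lucas n : ℝ) = phi ^ n - phi⁻¹ ^ n := by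
  rw [lucas_real, psi_eq, hn.neg_pow]; ring

lemma phi_inv_lt_one : phi⁻¹ < 1 := inv_lt_one_of_one_lt₀ phi_gt_one
lemma phi_inv_pos : (0:ℝ) < phi⁻¹ := inv_pos.2 phi_pos

set_option maxHeartbeats 1000000 in
lemma key (b d : ℕ) (hb : Odd b) (hd : 1 ≤ d) :
    artanh ((lucas b : ℝ) / (lucas (b + 2*d) : ℝ)) =
      artanh (phi⁻¹ ^ (2*d)) - artanh (phi⁻¹ ^ (2*(b+d))) := by
  have hb1 : 1 ≤ b := hb.pos
  have ha : Odd (b + 2*d) := by rcases hb with ⟨j, hj⟩; exact ⟨j + d, by omega⟩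
  obtain ⟨u, hu⟩ : ∃ u : ℝ, u = phi ^ b := ⟨_, rfl⟩
  obtain ⟨v, hv⟩ : ∃ v : ℝ, v = phi ^ d := ⟨_, rfl⟩
  have hu1 : 1 < u := hu ▸ one_lt_pow₀ phi_gt_one (by omega)
  have hv1 : 1 < v := hv ▸ one_lt_pow₀ phi_gt_one (by omega)
  have hu0 : (0:ℝ) < u := by linarith
  have hv0 : (0:ℝ) < v := by linarith
  have hu2 : 1 < u^2 := by nlinarith
  have hv2 : 1 < v^2 := by nlinarith
  have hiu : (0:ℝ) < (u^2)⁻¹ := by positivity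
  have hiv : (0:ℝ) < (v^2)⁻¹ := by positivity
  have hiu1 : (u^2)⁻¹ < 1 := inv_lt_one_of_one_lt₀ hu2
  have hiv1 : (v^2)⁻¹ < 1 := inv_lt_one_of_one_lt₀ hv2
  have hLb : (lucas b : ℝ) = u - u⁻¹ := by rw [lucas_odd hb, inv_pow, hu]
  have hea : phi ^ (b + 2*d) = u * v^2 := by
    rw [hu, hv, ← pow_mul, ← pow_add]; congr 1; ring
  have hLa : (lucas (b + 2*d) : ℝ) = u * v^2 - (u * v^2)⁻¹ := by
    rw [lucas_odd ha, inv_pow, hea]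
  have hx : phi⁻¹ ^ (2*d) = (v^2)⁻¹ := by
    rw [inv_pow, hv, ← pow_mul]; congr 2; ring
  have hy : phi⁻¹ ^ (2*(b+d)) = (u^2 * v^2)⁻¹ := by
    rw [inv_pow, hu, hv, ← pow_mul, ← pow_mul, ← pow_add]; congr 2; ring
  have huinv : u⁻¹ < 1 := inv_lt_one_of_one_lt₀ hu1
  have huip : (0:ℝ) < u⁻¹ := by positivity
  have huv2 : 1 < u * v^2 := by nlinarith
  have huvinv : (u * v^2)⁻¹ < 1 := inv_lt_one_of_one_lt₀ huv2
  have huvip : (0:ℝ) < (u * v^2)⁻¹ := by positivity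
  have hLa0 : (0:ℝ) < u * v^2 - (u * v^2)⁻¹ := by linarith
  have hLb0 : (0:ℝ) < u - u⁻¹ := by linarith
  have hu2v2 : 1 < u^2 * v^2 := by nlinarith
  have huv1 : (u^2 * v^2)⁻¹ < 1 := inv_lt_one_of_one_lt₀ hu2v2
  have huv0 : (0:ℝ) < (u^2 * v^2)⁻¹ := by positivity
  have hlt : u - u⁻¹ < u * v^2 - (u * v^2)⁻¹ := by
    have h1 : u < u * v^2 := by nlinarith
    have h2 : (u * v^2)⁻¹ < u⁻¹ := by
      apply inv_strictAnti₀ hu0 h1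
    linarith
  rw [hLb, hLa, hx, hy]
  unfold artanh
  have hfrac1 : (0:ℝ) < 1 - (u - u⁻¹) / (u * v^2 - (u * v^2)⁻¹) := by
    have : (u - u⁻¹) / (u * v^2 - (u * v^2)⁻¹) < 1 := (div_lt_one hLa0).2 hlt
    linarith
  have hfrac0 : (0:ℝ) ≤ (u - u⁻¹) / (u * v^2 - (u * v^2)⁻¹) := le_of_lt (div_pos hLb0 hLa0)
  have h3 : (0:ℝ) < 1 - (v^2)⁻¹ := by linarith
  have h4 : (0:ℝ) < 1 - (u^2*v^2)⁻¹ := by linarith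
  have hXpos : (0:ℝ) < (1 + (v^2)⁻¹) / (1 - (v^2)⁻¹) := div_pos (by linarith) h3
  have hYpos : (0:ℝ) < (1 + (u^2*v^2)⁻¹) / (1 - (u^2*v^2)⁻¹) := div_pos (by linarith) h4
  rw [← mul_sub, ← Real.log_div (ne_of_gt hXpos) (ne_of_gt hYpos)]
  congr 2
  have hu' : u ≠ 0 := ne_of_gt hu0
  have hv' : v ≠ 0 := ne_of_gt hv0
  have hQ : u * v^2 - (u * v^2)⁻¹ ≠ 0 := ne_of_gt hLa0
  have hQP : (0:ℝ) < (u * v^2 - (u * v^2)⁻¹) - (u - u⁻¹) := by linarith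
  have hD2 : (0:ℝ) < u^2*v^4 - u^2*v^2 + v^2 - 1 := by nlinarith
  have e1 : 1 + (u - u⁻¹) / (u * v^2 - (u * v^2)⁻¹)
      = ((u * v^2 - (u * v^2)⁻¹) + (u - u⁻¹)) / (u * v^2 - (u * v^2)⁻¹) := by
    rw [add_div, div_self hQ]
  have e2 : 1 - (u - u⁻¹) / (u * v^2 - (u * v^2)⁻¹)
      = ((u * v^2 - (u * v^2)⁻¹) - (u - u⁻¹)) / (u * v^2 - (u * v^2)⁻¹) := by
    rw [eq_div_iff hQ, sub_mul, one_mul, div_mul_cancel₀ _ hQ]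
  rw [e1, e2, div_div_div_cancel_right₀ hQ]
  have eL : ((u * v^2 - (u * v^2)⁻¹) + (u - u⁻¹)) / ((u * v^2 - (u * v^2)⁻¹) - (u - u⁻¹))
      = (u^2*v^4 + u^2*v^2 - v^2 - 1) / (u^2*v^4 - u^2*v^2 + v^2 - 1) := by
    rw [div_eq_div_iff (ne_of_gt hQP) (ne_of_gt hD2)]
    field_simp
    ring
  have eX : (1 + (v^2)⁻¹) / (1 - (v^2)⁻¹) = (v^2 + 1) / (v^2 - 1) := by
    rw [div_eq_div_iff (ne_of_gt h3) (by nlinarith : (v^2 - 1 : ℝ) ≠ 0)]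
    field_simp
  have eY : (1 + (u^2*v^2)⁻¹) / (1 - (u^2*v^2)⁻¹) = (u^2*v^2 + 1) / (u^2*v^2 - 1) := by
    rw [div_eq_div_iff (ne_of_gt h4) (by nlinarith : (u^2*v^2 - 1 : ℝ) ≠ 0)]
    field_simp
  rw [eL, eX, eY, div_div_div_eq]
  congr 1 <;> ring

lemma artanh_zero : artanh 0 = 0 := by unfold artanh; norm_num

lemma artanh_tendsto : Filter.Tendsto artanh (nhds 0) (nhds 0) := by
  have hc : ContinuousAt artanh 0 := by
    unfold artanh
    apply ContinuousAt.mul continuousAt_const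
    apply ContinuousAt.comp (Real.continuousAt_log (by norm_num))
    exact ContinuousAt.div (by fun_prop) (by fun_prop) (by norm_num)
  simpa [artanh_zero] using hc.tendsto

lemma artanh_nonneg {x : ℝ} (hx : 0 ≤ x) (h1 : x < 1) : 0 ≤ artanh x := by
  unfold artanh
  have : (1:ℝ) ≤ (1 + x) / (1 - x) := by
    rw [le_div_iff₀ (by linarith)]; linarith
  have := Real.log_nonneg this
  linarith

lemma artanh_mono {x y : ℝ} (hx : 0 ≤ x) (hxy : x ≤ y) (hy : y < 1) :
    artanh x ≤ artanh y := by
  unfold artanh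
  have h1 : (1 + x) / (1 - x) ≤ (1 + y) / (1 - y) :=
    div_le_div₀ (by linarith) (by linarith) (by linarith) (by linarith)
  have h2 : (0:ℝ) < (1 + x) / (1 - x) := div_pos (by linarith) (by linarith)
  have := Real.log_le_log h2 h1
  linarith

set_option maxHeartbeats 1000000 in
theorem stmt_8 (p m : ℕ) (hp : Odd p) (hm : Odd m) :
    ∑' k : ℕ, artanh ((lucas (p * m) : ℝ) / (lucas (p * (2 * (k + 1) + m)) : ℝ)) =
      ∑ k ∈ Finset.Icc 1 m, artanh (phi ^ (-(2 * p * k : ℤ))) := by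
  have hp1 : 1 ≤ p := hp.pos
  have hm1 : 1 ≤ m := hm.pos
  set g : ℕ → ℝ := fun j => artanh (phi⁻¹ ^ (2 * p * j)) with hg
  set f : ℕ → ℝ := fun k =>
    artanh ((lucas (p * m) : ℝ) / (lucas (p * (2 * (k + 1) + m)) : ℝ)) with hf
  -- pointwise identity
  have hpm : Odd (p * m) := hp.mul hm
  have hterm : ∀ k : ℕ, f k = g (k + 1) - g (k + 1 + m) := by
    intro k
    have h1 : p * (2 * (k + 1) + m) = p * m + 2 * (p * (k + 1)) := by ring
    have h2 := key (p * m) (p * (k + 1)) hpm (Nat.mul_pos (by omega) (by omega))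
    rw [hf, hg]
    simp only [h1]
    rw [h2]
    congr 2 <;> ring
  -- g tends to 0
  have hgt : Filter.Tendsto g Filter.atTop (nhds 0) := by
    apply artanh_tendsto.comp
    apply (tendsto_pow_atTop_nhds_zero_of_lt_one phi_inv_pos.le phi_inv_lt_one).comp
    apply Filter.tendsto_atTop_mono (fun j => ?_) Filter.tendsto_id
    calc (j : ℕ) = 1 * 1 * j := by ring
      _ ≤ 2 * p * j := by gcongr <;> omega
  -- G
  set G : ℕ → ℝ := fun k => ∑ j ∈ Finset.range m, g (k + 1 + j) with hG
  obtain ⟨m', hm'⟩ : ∃ m', m = m' + 1 := ⟨m - 1, by omega⟩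
  have hstep : ∀ k, f k = G k - G (k + 1) := by
    intro k
    rw [hterm k, hG]
    simp only [hm']
    rw [Finset.sum_range_succ', Finset.sum_range_succ]
    have : ∀ j, k + 1 + (j + 1) = k + 1 + 1 + j := fun j => by omega
    rw [Finset.sum_congr rfl fun j _ => by rw [this j]]
    have : k + 1 + 1 + m' = k + 1 + (m' + 1) := by omega
    rw [this]
    ring
  -- partial sums
  have hpart : ∀ N, ∑ k ∈ Finset.range N, f k = G 0 - G N := by
    intro N
    rw [Finset.sum_congr rfl fun k _ => hstep k]
    exact Finset.sum_range_sub' G N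
  -- G N → 0
  have hGt : Filter.Tendsto G Filter.atTop (nhds 0) := by
    have : Filter.Tendsto (fun N => ∑ j ∈ Finset.range m, g (N + 1 + j))
        Filter.atTop (nhds (∑ j ∈ Finset.range m, (0:ℝ))) := by
      apply tendsto_finset_sum
      intro j _
      exact hgt.comp (Filter.tendsto_atTop_mono (fun N => (by omega : N ≤ N + 1 + j)) Filter.tendsto_id)
    simpa using this
  -- nonneg
  have hnn : ∀ k, 0 ≤ f k := by
    intro k
    rw [hterm k]
    have h1 : phi⁻¹ ^ (2 * p * (k + 1 + m)) ≤ phi⁻¹ ^ (2 * p * (k + 1)) :=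
      pow_le_pow_of_le_one phi_inv_pos.le phi_inv_lt_one.le (by nlinarith)
    have h2 : phi⁻¹ ^ (2 * p * (k + 1)) < 1 :=
      pow_lt_one₀ phi_inv_pos.le phi_inv_lt_one (Nat.mul_ne_zero (Nat.mul_ne_zero (by omega) (by omega)) (by omega))
    have h3 : (0:ℝ) ≤ phi⁻¹ ^ (2 * p * (k + 1 + m)) := pow_nonneg phi_inv_pos.le _
    have := artanh_mono h3 h1 h2
    simp only [hg]
    linarith
  -- HasSum
  have hsum : HasSum f (G 0) := by
    rw [hasSum_iff_tendsto_nat_of_nonneg hnn]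
    have : (fun N => ∑ k ∈ Finset.range N, f k) = fun N => G 0 - G N := funext hpart
    rw [this]
    simpa using (hGt.const_sub (G 0))
  rw [hsum.tsum_eq, hG]
  rw [← Finset.Ico_add_one_right_eq_Icc, Finset.sum_Ico_eq_sum_range]
  simp only [Nat.add_sub_cancel]
  apply Finset.sum_congr rfl
  intro j _
  show artanh (phi⁻¹ ^ (2 * p * (0 + 1 + j))) = _
  congr 1
  rw [← zpow_natCast phi⁻¹, inv_zpow, ← zpow_neg]
  congr 1
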